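/- Let n ≥ 1, let X, Y : ℝⁿ → ℝⁿ be smooth vector fields, let δ > 0, let φ : (−δ, δ) → ℝⁿ be differentiable with φ'(t) = X(φ(t)) and φ(0) = p, and let M : (−δ, δ) → ℝⁿˣⁿ be differentiable with M'(t) = DX(φ(t))·M(t), M(0) = I, and M(t) invertible for all t. Then for every compact subinterval K ⊆ (−δ, δ) containing 0 there exists C > 0 such that ‖M(t)⁻¹·Y(φ(t)) − Y(p) − t·[X,Y](p)‖ ≤ C·t² for all t ∈ K, where [X,Y](x) := DY(x)·X(x) − DX(x)·Y(x). -/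

import Mathlib

open Set

noncomputable section

/-- Lie bracket of vector fields: `[X,Y] = DY·X − DX·Y`. -/
def lieBracketVF {E : Type*} [NormedAddCommGroup E] [NormedSpace ℝ E]
    (X Y : E → E) : E → E :=
  fun x => fderiv ℝ Y x (X x) - fderiv ℝ X x (Y x)

/-- If `φ` is the integral curve of `X` through `p` on `(−δ,δ)` and
`M` solves the variational equation `M' = DX(φ)·M`, `M(0) = I`, with `M(t)` invertible
(inverse `Minv t`), then on every compact subinterval `[a,b] ⊆ (−δ,δ)` containing `0`
one has `‖M(t)⁻¹·Y(φ(t)) − Y(p) − t·[X,Y](p)‖ ≤ C·t²`. -/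
theorem statement_14 (n : ℕ) (hn : 1 ≤ n)
    (X Y : EuclideanSpace ℝ (Fin n) → EuclideanSpace ℝ (Fin n))
    (hX : ContDiff ℝ (⊤ : ℕ∞) X) (hY : ContDiff ℝ (⊤ : ℕ∞) Y)
    (δ : ℝ) (hδ : 0 < δ) (p : EuclideanSpace ℝ (Fin n))
    (φ : ℝ → EuclideanSpace ℝ (Fin n)) (hφ0 : φ 0 = p)
    (hφ : ∀ t ∈ Ioo (-δ) δ, HasDerivAt φ (X (φ t)) t)
    (M Minv : ℝ → EuclideanSpace ℝ (Fin n) →L[ℝ] EuclideanSpace ℝ (Fin n))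
    (hM0 : M 0 = ContinuousLinearMap.id ℝ (EuclideanSpace ℝ (Fin n)))
    (hM : ∀ t ∈ Ioo (-δ) δ, HasDerivAt M ((fderiv ℝ X (φ t)).comp (M t)) t)
    (hMinv_left : ∀ t ∈ Ioo (-δ) δ,
      (Minv t).comp (M t) = ContinuousLinearMap.id ℝ (EuclideanSpace ℝ (Fin n)))
    (hMinv_right : ∀ t ∈ Ioo (-δ) δ,
      (M t).comp (Minv t) = ContinuousLinearMap.id ℝ (EuclideanSpace ℝ (Fin n))) :
    ∀ a b : ℝ, -δ < a → a ≤ 0 → 0 ≤ b → b < δ →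
      ∃ C > (0:ℝ), ∀ t ∈ Icc a b,
        ‖Minv t (Y (φ t)) - Y p - t • lieBracketVF X Y p‖ ≤ C * t ^ 2 := by
  intro a b ha ha0 hb0 hb
  have hIopen : IsOpen (Ioo (-δ) δ) := isOpen_Ioo
  have h0I : (0:ℝ) ∈ Ioo (-δ) δ := ⟨by linarith, hδ⟩
  have hKI : Icc a b ⊆ Ioo (-δ) δ := fun t ht => ⟨lt_of_lt_of_le ha ht.1, lt_of_le_of_lt ht.2 hb⟩
  have htop : ((⊤:ℕ∞) : WithTop ℕ∞) + 1 ≤ ((⊤:ℕ∞) : WithTop ℕ∞) := by exact_mod_cast le_refl _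
  have hone : (1 : WithTop ℕ∞) ≤ ((⊤:ℕ∞) : WithTop ℕ∞) := by exact_mod_cast le_top
  set B : EuclideanSpace ℝ (Fin n) → EuclideanSpace ℝ (Fin n) := lieBracketVF X Y with hBdef
  have hBc : ContDiff ℝ (⊤:ℕ∞) B :=
    ((hY.fderiv_right htop).clm_apply hX).sub ((hX.fderiv_right htop).clm_apply hY)
  have hunit : ∀ t ∈ Ioo (-δ) δ, M t * Minv t = 1 ∧ Minv t * M t = 1 := fun t ht =>
    ⟨hMinv_right t ht, hMinv_left t ht⟩
  -- derivative of Minv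
  have hMinv_deriv : ∀ t ∈ Ioo (-δ) δ,
      HasDerivAt Minv (-((Minv t).comp (fderiv ℝ X (φ t)))) t := by
    intro t ht
    set u : (EuclideanSpace ℝ (Fin n) →L[ℝ] EuclideanSpace ℝ (Fin n))ˣ :=
      ⟨M t, Minv t, (hunit t ht).1, (hunit t ht).2⟩ with hu
    have h1 := (hasFDerivAt_ringInverse (𝕜 := ℝ) u).comp_hasDerivAt t (hM t ht)
    have heq : Minv =ᶠ[nhds t] fun s => Ring.inverse (M s) := by
      filter_upwards [hIopen.mem_nhds ht] with s hs
      exact (Ring.inverse_unit ⟨M s, Minv s, (hunit s hs).1, (hunit s hs).2⟩).symm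
    have h3 := h1.congr_of_eventuallyEq heq
    convert h3 using 1
    case e'_4 | e'_5 | e'_6 => rfl
    have huinv : (↑u⁻¹ : EuclideanSpace ℝ (Fin n) →L[ℝ] EuclideanSpace ℝ (Fin n)) = Minv t := rfl
    rw [ContinuousLinearMap.neg_apply, ContinuousLinearMap.mulLeftRight_apply, huinv]
    have hmul : Minv t * (fderiv ℝ X (φ t)).comp (M t) * Minv t
        = Minv t * fderiv ℝ X (φ t) := by
      have hAM : (fderiv ℝ X (φ t)).comp (M t) = fderiv ℝ X (φ t) * M t := rfl
      rw [hAM, mul_assoc, mul_assoc, (hunit t ht).1, mul_one]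
    rw [hmul]
    rfl
  -- derivatives of Y∘φ, B∘φ
  have hYd : Differentiable ℝ Y := hY.differentiable (by simp)
  have hBd : Differentiable ℝ B := hBc.differentiable (by simp)
  have hYφ : ∀ t ∈ Ioo (-δ) δ,
      HasDerivAt (fun s => Y (φ s)) (fderiv ℝ Y (φ t) (X (φ t))) t :=
    fun t ht => (hYd (φ t)).hasFDerivAt.comp_hasDerivAt t (hφ t ht)
  have hBφ : ∀ t ∈ Ioo (-δ) δ,
      HasDerivAt (fun s => B (φ s)) (fderiv ℝ B (φ t) (X (φ t))) t :=
    fun t ht => (hBd (φ t)).hasFDerivAt.comp_hasDerivAt t (hφ t ht)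
  -- g and its derivative G
  set g : ℝ → EuclideanSpace ℝ (Fin n) := fun t => Minv t (Y (φ t)) with hgdef
  set G : ℝ → EuclideanSpace ℝ (Fin n) := fun t => Minv t (B (φ t)) with hGdef
  have hg : ∀ t ∈ Ioo (-δ) δ, HasDerivAt g (G t) t := by
    intro t ht
    have h1 := (hMinv_deriv t ht).clm_apply (hYφ t ht)
    convert h1 using 1
    case e'_4 | e'_5 | e'_6 => rfl
    simp only [hGdef, hBdef, lieBracketVF, map_sub, ContinuousLinearMap.neg_apply,
      ContinuousLinearMap.comp_apply]
    abel
  set G' : ℝ → EuclideanSpace ℝ (Fin n) := fun t =>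
    (-((Minv t).comp (fderiv ℝ X (φ t)))) (B (φ t))
      + Minv t (fderiv ℝ B (φ t) (X (φ t))) with hG'def
  have hG : ∀ t ∈ Ioo (-δ) δ, HasDerivAt G (G' t) t :=
    fun t ht => (hMinv_deriv t ht).clm_apply (hBφ t ht)
  -- continuity of G'
  have hφcont : ContinuousOn φ (Ioo (-δ) δ) :=
    fun t ht => (hφ t ht).continuousAt.continuousWithinAt
  have hMinvcont : ContinuousOn Minv (Ioo (-δ) δ) :=
    fun t ht => (hMinv_deriv t ht).continuousAt.continuousWithinAt
  have hAcont : ContinuousOn (fun t => fderiv ℝ X (φ t)) (Ioo (-δ) δ) :=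
    (hX.fderiv_right htop).continuous.comp_continuousOn hφcont
  have hBφcont : ContinuousOn (fun t => B (φ t)) (Ioo (-δ) δ) :=
    hBc.continuous.comp_continuousOn hφcont
  have hXφcont : ContinuousOn (fun t => X (φ t)) (Ioo (-δ) δ) :=
    hX.continuous.comp_continuousOn hφcont
  have hfBcont : ContinuousOn (fun t => fderiv ℝ B (φ t)) (Ioo (-δ) δ) :=
    (hBc.fderiv_right htop).continuous.comp_continuousOn hφcont
  have hG'cont : ContinuousOn G' (Ioo (-δ) δ) := by
    apply ContinuousOn.add
    · exact ((hMinvcont.clm_comp hAcont).neg).clm_apply hBφcont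
    · exact hMinvcont.clm_apply (hfBcont.clm_apply hXφcont)
  -- bound on the compact interval
  obtain ⟨C₀, hC₀⟩ := (isCompact_Icc (a := a) (b := b)).exists_bound_of_continuousOn
    (hG'cont.mono hKI)
  have hC₁nn : (0:ℝ) ≤ max C₀ 0 := le_max_right _ _
  refine ⟨max C₀ 0 + 1, by linarith, ?_⟩
  intro t ht
  have h0ab : (0:ℝ) ∈ Icc a b := ⟨ha0, hb0⟩
  have hab : a ≤ b := le_trans ha0 hb0
  have hsub : uIcc (0:ℝ) t ⊆ Icc a b := by
    rw [← uIcc_of_le hab]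
    exact uIcc_subset_uIcc (by rw [uIcc_of_le hab]; exact h0ab) (by rw [uIcc_of_le hab]; exact ht)
  have hconv : Convex ℝ (uIcc (0:ℝ) t) := convex_uIcc _ _
  have hGderivWithin : ∀ s ∈ uIcc (0:ℝ) t, HasDerivWithinAt G (G' s) (uIcc (0:ℝ) t) s :=
    fun s hs => (hG s (hKI (hsub hs))).hasDerivWithinAt
  have hG'bd : ∀ s ∈ uIcc (0:ℝ) t, ‖G' s‖ ≤ max C₀ 0 :=
    fun s hs => le_trans (hC₀ s (hsub hs)) (le_max_left _ _)
  have hGlip : ∀ s ∈ uIcc (0:ℝ) t, ‖G s - G 0‖ ≤ max C₀ 0 * |t| := by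
    intro s hs
    have h1 := Convex.norm_image_sub_le_of_norm_hasDerivWithin_le hGderivWithin hG'bd hconv
      left_mem_uIcc hs
    have hst : ‖s - 0‖ ≤ |t| := by
      rw [sub_zero, Real.norm_eq_abs]
      rcases hs with ⟨h1', h2'⟩
      refine abs_le.2 ⟨?_, le_trans h2' (max_le (abs_nonneg t) (le_abs_self t))⟩
      exact le_trans (le_min (neg_nonpos.2 (abs_nonneg t)) (neg_abs_le t)) h1'
    calc ‖G s - G 0‖ ≤ max C₀ 0 * ‖s - 0‖ := h1
      _ ≤ max C₀ 0 * |t| := mul_le_mul_of_nonneg_left hst hC₁nn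
  -- outer mean value inequality for f s = g s - s • G 0
  set f : ℝ → EuclideanSpace ℝ (Fin n) := fun s => g s - s • G 0 with hfdef
  have hfderiv : ∀ s ∈ uIcc (0:ℝ) t, HasDerivWithinAt f (G s - G 0) (uIcc (0:ℝ) t) s := by
    intro s hs
    have h1 : HasDerivAt (fun y : ℝ => y • G 0) ((1:ℝ) • G 0) s :=
      (hasDerivAt_id s).smul_const (G 0)
    rw [one_smul] at h1
    exact ((hg s (hKI (hsub hs))).sub h1).hasDerivWithinAt
  have hmain := Convex.norm_image_sub_le_of_norm_hasDerivWithin_le hfderiv hGlip hconv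
    left_mem_uIcc right_mem_uIcc
  -- values at 0
  have hMinv0 : Minv 0 = ContinuousLinearMap.id ℝ (EuclideanSpace ℝ (Fin n)) := by
    have h := hMinv_left 0 h0I
    rwa [hM0, ContinuousLinearMap.comp_id] at h
  have hg0 : g 0 = Y p := by rw [hgdef]; simp [hMinv0, hφ0]
  have hG0 : G 0 = B p := by rw [hGdef]; simp [hMinv0, hφ0]
  have hft : Minv t (Y (φ t)) - Y p - t • lieBracketVF X Y p = f t - f 0 := by
    have h1 : f t = Minv t (Y (φ t)) - t • B p := by rw [hfdef]; simp [hgdef, hG0]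
    have h2 : f 0 = Y p := by rw [hfdef]; simp [hg0]
    rw [h1, h2, hBdef]
    abel
  rw [hft]
  have habs : ‖t - 0‖ = |t| := by rw [sub_zero, Real.norm_eq_abs]
  calc ‖f t - f 0‖ ≤ max C₀ 0 * |t| * ‖t - 0‖ := hmain
    _ = max C₀ 0 * t ^ 2 := by rw [habs, mul_assoc, abs_mul_abs_self, sq]
    _ ≤ (max C₀ 0 + 1) * t ^ 2 := by nlinarith [sq_nonneg t]

end
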